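/- Let C ⊆ F_2^n be a binary linear code of dimension k ≥ 1. For a nonzero codeword set, define c_α as the minimum, over all sets of α distinct nonzero codewords of C, of the cardinality of the union of their supports; and for 1 ≤ r ≤ k define the r-th generalized Hamming weight d_r as the minimum cardinality of the support χ(A) = {i : ∃ a ∈ A, a_i ≠ 0} over all r-dimensional linear subcodes A of C. Then for every integer i ≥ 0 and every integer α with 2^i ≤ α ≤ min(2^{i+1} − 1, 2^k − 1), we have c_α = d_{i+1}. -/

import Mathlib

open scoped Classical


/-- The number of coordinates which are nonzero in some element of `A`. -/
noncomputable def supportCard {n : ℕ} (A : Set (Fin n → ZMod 2)) : ℕ :=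
  (Finset.univ.filter fun i => ∃ x ∈ A, x i ≠ 0).card

/-- `cHam C a` is the minimum, over all sets of `a` distinct nonzero codewords
of `C`, of the number of coordinates which are nonzero in at least one of
these `a` codewords (the minimum `a`-Hamming covering of `C`). -/
noncomputable def cHam {n : ℕ} (C : Submodule (ZMod 2) (Fin n → ZMod 2)) (a : ℕ) : ℕ :=
  sInf {m | ∃ S : Finset (Fin n → ZMod 2),
    ↑S ⊆ (C : Set (Fin n → ZMod 2)) \ {0} ∧ S.card = a ∧
      supportCard (↑S : Set (Fin n → ZMod 2)) = m}

/-- `dHam C r` is the `r`-th generalized Hamming weight of `C`: the minimum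
support size of an `r`-dimensional linear subcode of `C`. -/
noncomputable def dHam {n : ℕ} (C : Submodule (ZMod 2) (Fin n → ZMod 2)) (r : ℕ) : ℕ :=
  sInf {m | ∃ A : Submodule (ZMod 2) (Fin n → ZMod 2),
    A ≤ C ∧ Module.finrank (ZMod 2) A = r ∧
      supportCard (↑A : Set (Fin n → ZMod 2)) = m}

lemma supportCard_mono' {n : ℕ} {A B : Set (Fin n → ZMod 2)} (h : A ⊆ B) :
    supportCard A ≤ supportCard B := by
  apply Finset.card_le_card
  intro i hi
  simp only [Finset.mem_filter] at *
  obtain ⟨_, x, hx, hxi⟩ := hi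
  exact ⟨Finset.mem_univ _, x, h hx, hxi⟩

lemma span_support' {n : ℕ} (S : Set (Fin n → ZMod 2)) {x : Fin n → ZMod 2}
    (hx : x ∈ Submodule.span (ZMod 2) S) : ∀ i, x i ≠ 0 → ∃ s ∈ S, s i ≠ 0 := by
  induction hx using Submodule.span_induction with
  | mem y hy => exact fun i hi => ⟨y, hy, hi⟩
  | zero => exact fun i hi => absurd rfl hi
  | add y z _ _ hy hz =>
    intro i hi
    by_cases h : y i ≠ 0
    · exact hy i h
    · push_neg at h
      refine hz i ?_
      intro h2
      simp [Pi.add_apply, h, h2] at hi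
  | smul c y _ hy =>
    intro i hi
    refine hy i ?_
    intro h
    simp [Pi.smul_apply, h] at hi

lemma exists_le_finrank_eq' {n : ℕ} (W : Submodule (ZMod 2) (Fin n → ZMod 2)) (r : ℕ)
    (hr : r ≤ Module.finrank (ZMod 2) W) :
    ∃ A : Submodule (ZMod 2) (Fin n → ZMod 2), A ≤ W ∧ Module.finrank (ZMod 2) A = r := by
  let b := Module.finBasis (ZMod 2) W
  have hli : LinearIndependent (ZMod 2) fun j : Fin (Module.finrank (ZMod 2) W) =>
      ((b j : W) : Fin n → ZMod 2) :=
    b.linearIndependent.map' W.subtype (Submodule.ker_subtype W)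
  have hli2 : LinearIndependent (ZMod 2)
      ((fun j => ((b j : W) : Fin n → ZMod 2)) ∘ Fin.castLE hr) :=
    hli.comp _ (Fin.castLE_injective hr)
  refine ⟨Submodule.span (ZMod 2)
      (Set.range ((fun j => ((b j : W) : Fin n → ZMod 2)) ∘ Fin.castLE hr)), ?_, ?_⟩
  · rw [Submodule.span_le]
    rintro _ ⟨j, rfl⟩
    exact (b (Fin.castLE hr j)).2
  · rw [finrank_span_eq_card hli2, Fintype.card_fin]

lemma card_submodule' {n : ℕ} (W : Submodule (ZMod 2) (Fin n → ZMod 2)) :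
    Nat.card W = 2 ^ Module.finrank (ZMod 2) W := by
  have : Fintype W := Fintype.ofFinite W
  rw [Nat.card_eq_fintype_card, Module.card_eq_pow_finrank (K := ZMod 2), ZMod.card]

lemma toFinset_card_submodule {n : ℕ} (W : Submodule (ZMod 2) (Fin n → ZMod 2)) :
    (Set.toFinset (W : Set (Fin n → ZMod 2))).card = 2 ^ Module.finrank (ZMod 2) W := by
  rw [← Set.ncard_eq_toFinset_card', ← Nat.card_coe_set_eq]
  exact card_submodule' W

set_option maxHeartbeats 1000000

/-- For a binary linear code `C` of dimension `k ≥ 1`, for every `i ≥ 0` and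
every `a` with `2^i ≤ a ≤ min (2^{i+1} - 1) (2^k - 1)`, the minimum
`a`-Hamming covering equals the `(i+1)`-st generalized Hamming weight:
`c_a = d_{i+1}`. -/
theorem stmt19 {n k : ℕ} (hk : 1 ≤ k)
    (C : Submodule (ZMod 2) (Fin n → ZMod 2))
    (hC : Module.finrank (ZMod 2) C = k)
    (i a : ℕ) (h1 : 2 ^ i ≤ a) (h2 : a ≤ min (2 ^ (i + 1) - 1) (2 ^ k - 1)) :
    cHam C a = dHam C (i + 1) := by
  have h2a : a ≤ 2 ^ (i + 1) - 1 := le_trans h2 (min_le_left _ _)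
  have h2b : a ≤ 2 ^ k - 1 := le_trans h2 (min_le_right _ _)
  have hik : i + 1 ≤ k := by
    have hp : 2 ^ i < 2 ^ k := by
      have : (0:ℕ) < 2 ^ k := Nat.pow_pos (n := k) (by norm_num)
      omega
    exact (Nat.pow_lt_pow_iff_right (by norm_num)).mp hp
  -- the d-set is nonempty
  obtain ⟨A₀, hA₀C, hA₀r⟩ := exists_le_finrank_eq' C (i + 1) (by rw [hC]; exact hik)
  have hdne : {m | ∃ A : Submodule (ZMod 2) (Fin n → ZMod 2),
      A ≤ C ∧ Module.finrank (ZMod 2) A = i + 1 ∧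
        supportCard (↑A : Set (Fin n → ZMod 2)) = m}.Nonempty :=
    ⟨supportCard (↑A₀ : Set (Fin n → ZMod 2)), A₀, hA₀C, hA₀r, rfl⟩
  obtain ⟨A, hAC, hAr, hAs⟩ := Nat.sInf_mem hdne
  have hAs' : supportCard (↑A : Set (Fin n → ZMod 2)) = dHam C (i + 1) := hAs
  -- cHam ≤ dHam : pick a nonzero codewords inside A
  have hcd : cHam C a ≤ dHam C (i + 1) := by
    set T : Finset (Fin n → ZMod 2) := Set.toFinset (A : Set (Fin n → ZMod 2)) with hT
    have hTcard : T.card = 2 ^ (i + 1) := by rw [hT, toFinset_card_submodule, hAr]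
    have h0T : (0 : Fin n → ZMod 2) ∈ T := by
      rw [hT, Set.mem_toFinset]; exact A.zero_mem
    have hTe : (T.erase 0).card = 2 ^ (i + 1) - 1 := by
      rw [Finset.card_erase_of_mem h0T, hTcard]
    obtain ⟨S, hST, hScard⟩ := Finset.exists_subset_card_eq (show a ≤ (T.erase 0).card by omega)
    have hSsub : ↑S ⊆ (C : Set (Fin n → ZMod 2)) \ {0} := by
      intro x hx
      have hx' := hST hx
      rw [Finset.mem_erase, hT, Set.mem_toFinset] at hx'
      exact ⟨hAC hx'.2, hx'.1⟩
    have hle : cHam C a ≤ supportCard (↑S : Set (Fin n → ZMod 2)) :=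
      Nat.sInf_le ⟨S, hSsub, hScard, rfl⟩
    refine hle.trans ?_
    rw [← hAs']
    apply supportCard_mono'
    intro x hx
    have hx' := hST hx
    rw [Finset.mem_erase, hT, Set.mem_toFinset] at hx'
    exact hx'.2
  -- dHam ≤ cHam
  have hdc : dHam C (i + 1) ≤ cHam C a := by
    -- the c-set is nonempty
    set TC : Finset (Fin n → ZMod 2) := Set.toFinset (C : Set (Fin n → ZMod 2)) with hTC
    have hTCcard : TC.card = 2 ^ k := by rw [hTC, toFinset_card_submodule, hC]
    have h0TC : (0 : Fin n → ZMod 2) ∈ TC := by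
      rw [hTC, Set.mem_toFinset]; exact C.zero_mem
    have hTCe : (TC.erase 0).card = 2 ^ k - 1 := by
      rw [Finset.card_erase_of_mem h0TC, hTCcard]
    obtain ⟨S₀, hS₀T, hS₀card⟩ := Finset.exists_subset_card_eq (show a ≤ (TC.erase 0).card by omega)
    have hcne : {m | ∃ S : Finset (Fin n → ZMod 2),
        ↑S ⊆ (C : Set (Fin n → ZMod 2)) \ {0} ∧ S.card = a ∧
          supportCard (↑S : Set (Fin n → ZMod 2)) = m}.Nonempty := by
      refine ⟨supportCard (↑S₀ : Set (Fin n → ZMod 2)), S₀, ?_, hS₀card, rfl⟩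
      intro x hx
      have hx' := hS₀T hx
      rw [Finset.mem_erase, hTC, Set.mem_toFinset] at hx'
      exact ⟨hx'.2, hx'.1⟩
    obtain ⟨S, hSsub, hScard, hSs⟩ := Nat.sInf_mem hcne
    have hSs' : supportCard (↑S : Set (Fin n → ZMod 2)) = cHam C a := hSs
    set W : Submodule (ZMod 2) (Fin n → ZMod 2) :=
      Submodule.span (ZMod 2) (↑S : Set (Fin n → ZMod 2)) with hW
    have hWC : W ≤ C := by
      rw [hW, Submodule.span_le]
      intro x hx
      exact (hSsub hx).1
    have h0S : (0 : Fin n → ZMod 2) ∉ S := fun h => (hSsub h).2 rfl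
    have hfr : i + 1 ≤ Module.finrank (ZMod 2) W := by
      have hsub : insert (0 : Fin n → ZMod 2) S ⊆ Set.toFinset (W : Set (Fin n → ZMod 2)) := by
        intro x hx
        rw [Finset.mem_insert] at hx
        rw [Set.mem_toFinset]
        rcases hx with rfl | hx
        · exact W.zero_mem
        · exact Submodule.subset_span hx
      have hcard : a + 1 ≤ 2 ^ Module.finrank (ZMod 2) W := by
        have := Finset.card_le_card hsub
        rw [Finset.card_insert_of_notMem h0S, hScard, toFinset_card_submodule] at this
        exact this
      have : 2 ^ i < 2 ^ Module.finrank (ZMod 2) W := by omega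
      exact (Nat.pow_lt_pow_iff_right (by norm_num)).mp this
    obtain ⟨A', hA'W, hA'r⟩ := exists_le_finrank_eq' W (i + 1) hfr
    have hd : dHam C (i + 1) ≤ supportCard (↑A' : Set (Fin n → ZMod 2)) :=
      Nat.sInf_le ⟨A', hA'W.trans hWC, hA'r, rfl⟩
    refine hd.trans ?_
    rw [← hSs']
    apply Finset.card_le_card
    intro j hj
    simp only [Finset.mem_filter] at hj ⊢
    obtain ⟨_, x, hx, hxj⟩ := hj
    have hxA : x ∈ A' := hx
    have hxW : x ∈ Submodule.span (ZMod 2) (↑S : Set (Fin n → ZMod 2)) := by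
      rw [hW] at hA'W
      exact hA'W hxA
    obtain ⟨s, hs, hsj⟩ := span_support' (↑S) hxW j hxj
    exact ⟨Finset.mem_univ _, s, hs, hsj⟩
  omega
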